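/- arXiv:2206.06877 — 2 statements merged into one kernel-verified Lean document; each statement's English description precedes it below -/
import Mathlib

section
/- Let G be the graph obtained from K7 by deleting two nonadjacent edges, and let G' be obtained from G by a Δ-Y exchange on a triangle none of whose vertices is incident to a deleted edge. Then G' does not contain K_{4,4} minus an edge as a minor. -/
open SimpleGraph

/-- `H` is a minor of `G`: branch-set formulation. -/
def IsMinor {W V : Type*} (H : SimpleGraph W) (G : SimpleGraph V) : Prop :=
  ∃ ρ : W → Set V,
    (∀ w, (ρ w).Nonempty) ∧
    (∀ w, (G.induce (ρ w)).Connected) ∧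
    (Pairwise fun w w' => Disjoint (ρ w) (ρ w')) ∧
    ∀ ⦃w w'⦄, H.Adj w w' → ∃ a ∈ ρ w, ∃ b ∈ ρ w', G.Adj a b

/-- Δ-Y exchange on the triangle `v₁ v₂ v₃`. -/
def deltaY {V : Type*} (G : SimpleGraph V) (v₁ v₂ v₃ : V) : SimpleGraph (V ⊕ Unit) where
  Adj x y :=
    match x, y with
    | .inl a, .inl b => G.Adj a b ∧ s(a, b) ∉ ({s(v₁, v₂), s(v₂, v₃), s(v₁, v₃)} : Set (Sym2 V))
    | .inl a, .inr _ => a = v₁ ∨ a = v₂ ∨ a = v₃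
    | .inr _, .inl a => a = v₁ ∨ a = v₂ ∨ a = v₃
    | .inr _, .inr _ => False
  symm := by
    constructor
    rintro (a | a) (b | b) h
    · exact ⟨h.1.symm, by rw [show s(b, a) = s(a, b) from Sym2.eq_swap]; exact h.2⟩
    · exact h
    · exact h
    · exact h
  loopless := by
    constructor
    rintro (a | a) h
    · exact G.loopless.irrefl a h.1
    · exact h

/-- `K_{4,4}` minus an edge (the edge between `inl 0` and `inr 0`). -/
def K44e : SimpleGraph (Fin 4 ⊕ Fin 4) where
  Adj x y :=
    match x, y with
    | .inl i, .inr j => ¬(i = 0 ∧ j = 0)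
    | .inr j, .inl i => ¬(i = 0 ∧ j = 0)
    | _, _ => False
  symm := by constructor; rintro (i | i) (j | j) h <;> exact h
  loopless := by constructor; rintro (i | i) h <;> exact h

section helpers
variable {α : Type*}

lemma pigeon3 {a b c u₀ u₁ u₂ u₃ : α}
    (h0 : u₀ = a ∨ u₀ = b ∨ u₀ = c) (h1 : u₁ = a ∨ u₁ = b ∨ u₁ = c)
    (h2 : u₂ = a ∨ u₂ = b ∨ u₂ = c) (h3 : u₃ = a ∨ u₃ = b ∨ u₃ = c)
    (d01 : u₀ ≠ u₁) (d02 : u₀ ≠ u₂) (d03 : u₀ ≠ u₃)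
    (d12 : u₁ ≠ u₂) (d13 : u₁ ≠ u₃) (d23 : u₂ ≠ u₃) : False := by
  rcases h0 with h|h|h <;> rcases h1 with h'|h'|h' <;> rcases h2 with h''|h''|h'' <;>
    rcases h3 with h'''|h'''|h''' <;> simp_all

lemma L0 {a b c u₀ u₁ u₂ u₃ : α}
    (h1 : u₁ = a ∨ u₁ = b ∨ u₁ = c) (h2 : u₂ = a ∨ u₂ = b ∨ u₂ = c)
    (h3 : u₃ = a ∨ u₃ = b ∨ u₃ = c)
    (d12 : u₁ ≠ u₂) (d13 : u₁ ≠ u₃) (d23 : u₂ ≠ u₃)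
    (d01 : u₀ ≠ u₁) (d02 : u₀ ≠ u₂) (d03 : u₀ ≠ u₃) :
    u₀ ≠ a ∧ u₀ ≠ b ∧ u₀ ≠ c := by
  rcases h1 with h|h|h <;> rcases h2 with h'|h'|h' <;> rcases h3 with h''|h''|h'' <;> simp_all

lemma L1 {a b c u₁ u₂ u₃ t : α}
    (h1 : u₁ = a ∨ u₁ = b ∨ u₁ = c) (h2 : u₂ = a ∨ u₂ = b ∨ u₂ = c)
    (h3 : u₃ = a ∨ u₃ = b ∨ u₃ = c)
    (d12 : u₁ ≠ u₂) (d13 : u₁ ≠ u₃) (d23 : u₂ ≠ u₃)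
    (n1 : ¬(t = a ∧ u₁ = b) ∧ ¬(t = b ∧ u₁ = a) ∧ ¬(t = b ∧ u₁ = c) ∧ ¬(t = c ∧ u₁ = b) ∧
          ¬(t = a ∧ u₁ = c) ∧ ¬(t = c ∧ u₁ = a))
    (n2 : ¬(t = a ∧ u₂ = b) ∧ ¬(t = b ∧ u₂ = a) ∧ ¬(t = b ∧ u₂ = c) ∧ ¬(t = c ∧ u₂ = b) ∧
          ¬(t = a ∧ u₂ = c) ∧ ¬(t = c ∧ u₂ = a))
    (n3 : ¬(t = a ∧ u₃ = b) ∧ ¬(t = b ∧ u₃ = a) ∧ ¬(t = b ∧ u₃ = c) ∧ ¬(t = c ∧ u₃ = b) ∧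
          ¬(t = a ∧ u₃ = c) ∧ ¬(t = c ∧ u₃ = a)) :
    t ≠ a ∧ t ≠ b ∧ t ≠ c := by
  rcases h1 with h|h|h <;> rcases h2 with h'|h'|h' <;> rcases h3 with h''|h''|h'' <;> simp_all

lemma L2 {x₁ x₂ x₃ x₄ u t₁ t₂ t₃ : α}
    (hx12 : x₁ ≠ x₂) (hx13 : x₁ ≠ x₃) (hx14 : x₁ ≠ x₄)
    (hx23 : x₂ ≠ x₃) (hx24 : x₂ ≠ x₄) (hx34 : x₃ ≠ x₄)
    (hu : u = x₁ ∨ u = x₂ ∨ u = x₃ ∨ u = x₄)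
    (h1 : t₁ = x₁ ∨ t₁ = x₂ ∨ t₁ = x₃ ∨ t₁ = x₄)
    (h2 : t₂ = x₁ ∨ t₂ = x₂ ∨ t₂ = x₃ ∨ t₂ = x₄)
    (h3 : t₃ = x₁ ∨ t₃ = x₂ ∨ t₃ = x₃ ∨ t₃ = x₄)
    (d1 : t₁ ≠ u) (d2 : t₂ ≠ u) (d3 : t₃ ≠ u)
    (d12 : t₁ ≠ t₂) (d13 : t₁ ≠ t₃) (d23 : t₂ ≠ t₃)
    (n1 : ¬(t₁ = x₁ ∧ u = x₂) ∧ ¬(t₁ = x₂ ∧ u = x₁) ∧ ¬(t₁ = x₃ ∧ u = x₄) ∧ ¬(t₁ = x₄ ∧ u = x₃))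
    (n2 : ¬(t₂ = x₁ ∧ u = x₂) ∧ ¬(t₂ = x₂ ∧ u = x₁) ∧ ¬(t₂ = x₃ ∧ u = x₄) ∧ ¬(t₂ = x₄ ∧ u = x₃))
    (n3 : ¬(t₃ = x₁ ∧ u = x₂) ∧ ¬(t₃ = x₂ ∧ u = x₁) ∧ ¬(t₃ = x₃ ∧ u = x₄) ∧ ¬(t₃ = x₄ ∧ u = x₃)) :
    False := by
  rcases hu with h|h|h|h <;> rcases h1 with h'|h'|h'|h' <;> rcases h2 with h''|h''|h''|h'' <;>
    rcases h3 with h'''|h'''|h'''|h''' <;> simp_all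

end helpers

/-- `K₇` minus two nonadjacent edges, Δ-Y exchange on a triangle none of
whose vertices is incident to a deleted edge: no `K_{4,4} - e` minor. -/
theorem K7_minus_two_nonadjacent_deltaY_no_K44e_minor
    (x₁ x₂ x₃ x₄ : Fin 7)
    (hdist : x₁ ≠ x₂ ∧ x₁ ≠ x₃ ∧ x₁ ≠ x₄ ∧ x₂ ≠ x₃ ∧ x₂ ≠ x₄ ∧ x₃ ≠ x₄)
    (G : SimpleGraph (Fin 7))
    (hG : G = (⊤ : SimpleGraph (Fin 7)).deleteEdges {s(x₁, x₂), s(x₃, x₄)})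
    (a b c : Fin 7)
    (hab : G.Adj a b) (hbc : G.Adj b c) (hac : G.Adj a c)
    (hfree : ∀ w, w ∈ ({a, b, c} : Set (Fin 7)) → w ∉ ({x₁, x₂, x₃, x₄} : Set (Fin 7))) :
    ¬ IsMinor K44e (deltaY G a b c) := by
  obtain ⟨hx12, hx13, hx14, hx23, hx24, hx34⟩ := hdist
  have habne : a ≠ b := hab.ne
  have hacne : a ≠ c := hac.ne
  have hbcne : b ≠ c := hbc.ne
  have hax : a ≠ x₁ ∧ a ≠ x₂ ∧ a ≠ x₃ ∧ a ≠ x₄ := by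
    have := hfree a (by simp); simpa [Set.mem_insert_iff, not_or] using this
  have hbx : b ≠ x₁ ∧ b ≠ x₂ ∧ b ≠ x₃ ∧ b ≠ x₄ := by
    have := hfree b (by simp); simpa [Set.mem_insert_iff, not_or] using this
  have hcx : c ≠ x₁ ∧ c ≠ x₂ ∧ c ≠ x₃ ∧ c ≠ x₄ := by
    have := hfree c (by simp); simpa [Set.mem_insert_iff, not_or] using this
  obtain ⟨ha1, ha2, ha3, ha4⟩ := hax
  obtain ⟨hb1, hb2, hb3, hb4⟩ := hbx
  obtain ⟨hc1, hc2, hc3, hc4⟩ := hcx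
  subst hG
  -- coverage of Fin 7
  have hcov : ∀ u : Fin 7, u ≠ a → u ≠ b → u ≠ c → (u = x₁ ∨ u = x₂ ∨ u = x₃ ∨ u = x₄) := by
    intro u hua hub huc
    by_contra hcon
    push_neg at hcon
    obtain ⟨n1, n2, n3, n4⟩ := hcon
    have h8 : ({u, a, b, c, x₁, x₂, x₃, x₄} : Finset (Fin 7)).card = 8 := by
      rw [Finset.card_insert_of_notMem (by simp [*]),
        Finset.card_insert_of_notMem (by simp [*]),
        Finset.card_insert_of_notMem (by simp [*]),
        Finset.card_insert_of_notMem (by simp [*]),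
        Finset.card_insert_of_notMem (by simp [*]),
        Finset.card_insert_of_notMem (by simp [*]),
        Finset.card_insert_of_notMem (by simp [*]), Finset.card_singleton]
    have hle := Finset.card_le_univ ({u, a, b, c, x₁, x₂, x₃, x₄} : Finset (Fin 7))
    simp [h8] at hle
  -- adjacency extraction
  have hA : ∀ p q : Fin 7,
      (deltaY ((⊤ : SimpleGraph (Fin 7)).deleteEdges {s(x₁, x₂), s(x₃, x₄)}) a b c).Adj
        (Sum.inl p) (Sum.inl q) →
      (¬(p = x₁ ∧ q = x₂) ∧ ¬(p = x₂ ∧ q = x₁) ∧ ¬(p = x₃ ∧ q = x₄) ∧ ¬(p = x₄ ∧ q = x₃)) ∧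
      (¬(p = a ∧ q = b) ∧ ¬(p = b ∧ q = a) ∧ ¬(p = b ∧ q = c) ∧ ¬(p = c ∧ q = b) ∧
       ¬(p = a ∧ q = c) ∧ ¬(p = c ∧ q = a)) := by
    intro p q h
    simp only [deltaY, deleteEdges_adj, top_adj, Set.mem_insert_iff, Set.mem_singleton_iff,
      Sym2.eq_iff, not_or] at h
    tauto
  rintro ⟨ρ, hne, hconn, hdisj, hadjm⟩
  choose f hf using hne
  have hfinj : Function.Injective f := by
    intro w w' h
    by_contra hne'
    exact Set.disjoint_left.mp (hdisj hne') (hf w) (h ▸ hf w')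
  have hfsurj : Function.Surjective f := by
    have : Function.Bijective f :=
      (Fintype.bijective_iff_injective_and_card f).mpr ⟨hfinj, by simp⟩
    exact this.2
  have hsingle : ∀ w, ρ w = {f w} := by
    intro w
    refine Set.eq_singleton_iff_unique_mem.mpr ⟨hf w, fun y hy => ?_⟩
    obtain ⟨w', hw'⟩ := hfsurj y
    by_contra hne'
    have hww' : w ≠ w' := fun h => hne' (by rw [h, hw'])
    exact Set.disjoint_left.mp (hdisj hww') hy (hw' ▸ hf w')
  have hhom : ∀ w w', K44e.Adj w w' →
      (deltaY ((⊤ : SimpleGraph (Fin 7)).deleteEdges {s(x₁, x₂), s(x₃, x₄)}) a b c).Adj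
        (f w) (f w') := by
    intro w w' h
    obtain ⟨p, hp, q, hq, hpq⟩ := hadjm h
    rw [hsingle, Set.mem_singleton_iff] at hp hq
    rwa [hp, hq] at hpq
  have hK : ∀ i k : Fin 4, ¬(i = 0 ∧ k = 0) → K44e.Adj (Sum.inl i) (Sum.inr k) := fun _ _ h => h
  -- main core lemma
  have main : ∀ g : Fin 4 ⊕ Fin 4 → Fin 7 ⊕ Unit, Function.Injective g →
      (∀ w w', K44e.Adj w w' →
        (deltaY ((⊤ : SimpleGraph (Fin 7)).deleteEdges {s(x₁, x₂), s(x₃, x₄)}) a b c).Adj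
          (g w) (g w')) →
      ∀ i : Fin 4, g (Sum.inl i) ≠ Sum.inr () := by
    intro g hginj ghom i hgi
    have hne' : ∀ {w w' : Fin 4 ⊕ Fin 4} {p q : Fin 7}, w ≠ w' →
        g w = Sum.inl p → g w' = Sum.inl q → p ≠ q := by
      intro w w' p q hww hp hq h
      exact hww (hginj (by rw [hp, hq, h]))
    have hN : ∀ k : Fin 4, ¬(i = 0 ∧ k = 0) →
        ∃ u : Fin 7, g (Sum.inr k) = Sum.inl u ∧ (u = a ∨ u = b ∨ u = c) := by
      intro k hk
      have h := ghom _ _ (hK i k hk)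
      rw [hgi] at h
      rcases hgk : g (Sum.inr k) with u | u
      · rw [hgk] at h
        exact ⟨u, rfl, by simpa [deltaY] using h⟩
      · rw [hgk] at h
        simp [deltaY] at h
    obtain ⟨u₁, hg1, hu1⟩ := hN 1 (by simp)
    obtain ⟨u₂, hg2, hu2⟩ := hN 2 (by simp)
    obtain ⟨u₃, hg3, hu3⟩ := hN 3 (by simp)
    have d12 : u₁ ≠ u₂ := hne' (by simp) hg1 hg2
    have d13 : u₁ ≠ u₃ := hne' (by simp) hg1 hg3
    have d23 : u₂ ≠ u₃ := hne' (by simp) hg2 hg3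
    by_cases hi : i = 0
    · subst hi
      -- g (inr 0) = inl u₀
      rcases hg0 : g (Sum.inr 0) with u₀ | u
      swap
      · cases u
        exact absurd (hginj (hgi.trans hg0.symm)) (by simp)
      -- g (inl m) = inl t_m for m ≠ 0
      have hM : ∀ m : Fin 4, m ≠ 0 → ∃ t, g (Sum.inl m) = Sum.inl t := by
        intro m hm
        rcases hgm : g (Sum.inl m) with t | t
        · exact ⟨t, rfl⟩
        · cases t
          exact absurd (hginj (hgm.trans hgi.symm)) (by simp [hm])
      obtain ⟨t₁, ht1⟩ := hM 1 (by decide)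
      obtain ⟨t₂, ht2⟩ := hM 2 (by decide)
      obtain ⟨t₃, ht3⟩ := hM 3 (by decide)
      -- adjacency facts
      have AD : ∀ (m k : Fin 4) (t u : Fin 7), ¬(m = 0 ∧ k = 0) →
          g (Sum.inl m) = Sum.inl t → g (Sum.inr k) = Sum.inl u →
          (¬(t = x₁ ∧ u = x₂) ∧ ¬(t = x₂ ∧ u = x₁) ∧ ¬(t = x₃ ∧ u = x₄) ∧ ¬(t = x₄ ∧ u = x₃)) ∧
          (¬(t = a ∧ u = b) ∧ ¬(t = b ∧ u = a) ∧ ¬(t = b ∧ u = c) ∧ ¬(t = c ∧ u = b) ∧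
           ¬(t = a ∧ u = c) ∧ ¬(t = c ∧ u = a)) := by
        intro m k t u hmk hgm hgk
        have h := ghom _ _ (hK m k hmk)
        rw [hgm, hgk] at h
        exact hA t u h
      have A11 := AD 1 1 t₁ u₁ (by decide) ht1 hg1
      have A12 := AD 1 2 t₁ u₂ (by decide) ht1 hg2
      have A13 := AD 1 3 t₁ u₃ (by decide) ht1 hg3
      have A21 := AD 2 1 t₂ u₁ (by decide) ht2 hg1
      have A22 := AD 2 2 t₂ u₂ (by decide) ht2 hg2
      have A23 := AD 2 3 t₂ u₃ (by decide) ht2 hg3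
      have A31 := AD 3 1 t₃ u₁ (by decide) ht3 hg1
      have A32 := AD 3 2 t₃ u₂ (by decide) ht3 hg2
      have A33 := AD 3 3 t₃ u₃ (by decide) ht3 hg3
      have A10 := AD 1 0 t₁ u₀ (by decide) ht1 hg0
      have A20 := AD 2 0 t₂ u₀ (by decide) ht2 hg0
      have A30 := AD 3 0 t₃ u₀ (by decide) ht3 hg0
      -- u₀ not in {a,b,c}
      have d01 : u₀ ≠ u₁ := hne' (by simp) hg0 hg1
      have d02 : u₀ ≠ u₂ := hne' (by simp) hg0 hg2
      have d03 : u₀ ≠ u₃ := hne' (by simp) hg0 hg3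
      obtain ⟨h0a, h0b, h0c⟩ := L0 hu1 hu2 hu3 d12 d13 d23 d01 d02 d03
      have hu0x := hcov u₀ h0a h0b h0c
      -- t_m not in {a,b,c}
      obtain ⟨h1a, h1b, h1c⟩ := L1 hu1 hu2 hu3 d12 d13 d23 A11.2 A12.2 A13.2
      obtain ⟨h2a, h2b, h2c⟩ := L1 hu1 hu2 hu3 d12 d13 d23 A21.2 A22.2 A23.2
      obtain ⟨h3a, h3b, h3c⟩ := L1 hu1 hu2 hu3 d12 d13 d23 A31.2 A32.2 A33.2
      have ht1x := hcov t₁ h1a h1b h1c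
      have ht2x := hcov t₂ h2a h2b h2c
      have ht3x := hcov t₃ h3a h3b h3c
      have e1 : t₁ ≠ u₀ := hne' (by simp) ht1 hg0
      have e2 : t₂ ≠ u₀ := hne' (by simp) ht2 hg0
      have e3 : t₃ ≠ u₀ := hne' (by simp) ht3 hg0
      have e12 : t₁ ≠ t₂ := hne' (by simp) ht1 ht2
      have e13 : t₁ ≠ t₃ := hne' (by simp) ht1 ht3
      have e23 : t₂ ≠ t₃ := hne' (by simp) ht2 ht3
      exact L2 hx12 hx13 hx14 hx23 hx24 hx34 hu0x ht1x ht2x ht3x e1 e2 e3 e12 e13 e23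
        A10.1 A20.1 A30.1
    · obtain ⟨u₀, hg0, hu0⟩ := hN 0 (by simp [hi])
      have d01 : u₀ ≠ u₁ := hne' (by simp) hg0 hg1
      have d02 : u₀ ≠ u₂ := hne' (by simp) hg0 hg2
      have d03 : u₀ ≠ u₃ := hne' (by simp) hg0 hg3
      exact pigeon3 hu0 hu1 hu2 hu3 d01 d02 d03 d12 d13 d23
  -- apply main to f or f ∘ swap
  obtain ⟨w, hw⟩ := hfsurj (Sum.inr ())
  rcases w with i | j
  · exact main f hfinj hhom i hw
  · have hswap : ∀ w w' : Fin 4 ⊕ Fin 4, K44e.Adj w w' → K44e.Adj w.swap w'.swap := by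
      rintro (i | i) (j | j) h <;> simp [K44e, Sum.swap] at h ⊢ <;> tauto
    exact main (f ∘ Sum.swap) (hfinj.comp Sum.swap_leftInverse.injective)
      (fun w w' h => hhom _ _ (hswap _ _ h)) j (by simpa [Sum.swap] using hw)
end

section
/- Let G be the graph obtained from K7 by deleting two adjacent edges, say v1v6 and v1v7, and let G' be obtained by a Δ-Y exchange on the triangle {v2, v6, v7}. Then G' contains K_{4,4} minus an edge as a minor, witnessed by the bipartition {v1, v2, v6, v7} and {v3, v4, v5, v8}, where v8 is the new vertex of the exchange. -/
open SimpleGraph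

/-- Vertices `0,…,6` stand for `v₁,…,v₇`.  `G` is `K₇` minus the adjacent edges
`v₁v₆`, `v₁v₇`; `G'` is obtained by the Δ-Y exchange on the triangle `{v₂, v₆, v₇}`,
with `Sum.inr ()` being the new vertex `v₈`. -/
def G₃ : SimpleGraph (Fin 7) := (⊤ : SimpleGraph (Fin 7)).deleteEdges {s(0, 5), s(0, 6)}

def G₃' : SimpleGraph (Fin 7 ⊕ Unit) := deltaY G₃ 1 5 6

/-- Branch sets witnessing the `K_{4,4}-e` minor, with bipartition
`{v₁, v₂, v₆, v₇}` and `{v₃, v₄, v₅, v₈}` (the missing edge of `K44e` corresponding to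
the nonadjacent pair `v₁, v₈`). -/
def ρ₃ : Fin 4 ⊕ Fin 4 → Set (Fin 7 ⊕ Unit) :=
  Sum.elim
    ![{Sum.inl 0}, {Sum.inl 1}, {Sum.inl 5}, {Sum.inl 6}]
    ![{Sum.inr ()}, {Sum.inl 2}, {Sum.inl 3}, {Sum.inl 4}]

lemma induceSingletonConnected {V : Type*} (G : SimpleGraph V) (a : V) :
    (G.induce ({a} : Set V)).Connected := by
  rw [SimpleGraph.connected_iff]
  refine ⟨fun x y => ?_, ⟨⟨a, rfl⟩⟩⟩
  have : x = y := Subtype.ext (by rw [x.2, y.2])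
  rw [this]

def f₃ : Fin 4 ⊕ Fin 4 → Fin 7 ⊕ Unit :=
  Sum.elim ![.inl 0, .inl 1, .inl 5, .inl 6] ![.inr (), .inl 2, .inl 3, .inl 4]

lemma ρ₃_eq (w : Fin 4 ⊕ Fin 4) : ρ₃ w = {f₃ w} := by
  rcases w with i | i <;> fin_cases i <;> rfl

lemma f₃_inj : Function.Injective f₃ := by decide

lemma sym2_mem_iff (a b : Fin 7) :
    s(a, b) ∈ ({s(1, 5), s(5, 6), s(1, 6)} : Set (Sym2 (Fin 7))) ↔
      (a = 1 ∧ b = 5 ∨ a = 5 ∧ b = 1) ∨ (a = 5 ∧ b = 6 ∨ a = 6 ∧ b = 5) ∨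
      (a = 1 ∧ b = 6 ∨ a = 6 ∧ b = 1) := by
  simp [Set.mem_insert_iff, Sym2.eq, Sym2.rel_iff']

lemma sym2_mem_iff' (a b : Fin 7) :
    s(a, b) ∈ ({s(0, 5), s(0, 6)} : Set (Sym2 (Fin 7))) ↔
      (a = 0 ∧ b = 5 ∨ a = 5 ∧ b = 0) ∨ (a = 0 ∧ b = 6 ∨ a = 6 ∧ b = 0) := by
  simp [Set.mem_insert_iff, Sym2.eq, Sym2.rel_iff']

lemma G₃'_adj_inl (a b : Fin 7) :
    G₃'.Adj (Sum.inl a) (Sum.inl b) ↔ a ≠ b ∧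
      ¬((a = 0 ∧ b = 5 ∨ a = 5 ∧ b = 0) ∨ (a = 0 ∧ b = 6 ∨ a = 6 ∧ b = 0)) ∧
      ¬((a = 1 ∧ b = 5 ∨ a = 5 ∧ b = 1) ∨ (a = 5 ∧ b = 6 ∨ a = 6 ∧ b = 5) ∨
        (a = 1 ∧ b = 6 ∨ a = 6 ∧ b = 1)) := by
  show (G₃.Adj a b ∧ _) ↔ _
  rw [sym2_mem_iff]
  unfold G₃
  rw [SimpleGraph.deleteEdges_adj, sym2_mem_iff']
  simp [and_assoc]

instance : DecidableRel G₃'.Adj := fun x y =>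
  match x, y with
  | .inl a, .inl b => decidable_of_iff _ (G₃'_adj_inl a b).symm
  | .inl a, .inr _ => decidable_of_iff (a = 1 ∨ a = 5 ∨ a = 6) Iff.rfl
  | .inr _, .inl a => decidable_of_iff (a = 1 ∨ a = 5 ∨ a = 6) Iff.rfl
  | .inr _, .inr _ => decidable_of_iff False Iff.rfl

instance : DecidableRel K44e.Adj := fun x y =>
  match x, y with
  | .inl i, .inr j => decidable_of_iff (¬(i = 0 ∧ j = 0)) Iff.rfl
  | .inr j, .inl i => decidable_of_iff (¬(i = 0 ∧ j = 0)) Iff.rfl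
  | .inl _, .inl _ => decidable_of_iff False Iff.rfl
  | .inr _, .inr _ => decidable_of_iff False Iff.rfl

lemma adj_main : ∀ ⦃w w' : Fin 4 ⊕ Fin 4⦄, K44e.Adj w w' → G₃'.Adj (f₃ w) (f₃ w') := by
  decide

/-- `G'` contains `K_{4,4} - e` as a minor, witnessed by the bipartition
`{v₁, v₂, v₆, v₇}`, `{v₃, v₄, v₅, v₈}`. -/
theorem K7_minus_adjacent_deltaY_has_K44e_minor :
    ((∀ w, (ρ₃ w).Nonempty) ∧
      (∀ w, (G₃'.induce (ρ₃ w)).Connected) ∧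
      (Pairwise fun w w' => Disjoint (ρ₃ w) (ρ₃ w')) ∧
      ∀ ⦃w w'⦄, K44e.Adj w w' → ∃ a ∈ ρ₃ w, ∃ b ∈ ρ₃ w', G₃'.Adj a b) ∧
    IsMinor K44e G₃' := by
  have main : (∀ w, (ρ₃ w).Nonempty) ∧
      (∀ w, (G₃'.induce (ρ₃ w)).Connected) ∧
      (Pairwise fun w w' => Disjoint (ρ₃ w) (ρ₃ w')) ∧
      ∀ ⦃w w'⦄, K44e.Adj w w' → ∃ a ∈ ρ₃ w, ∃ b ∈ ρ₃ w', G₃'.Adj a b := by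
    refine ⟨?_, ?_, ?_, ?_⟩
    · intro w; rw [ρ₃_eq]; exact ⟨_, rfl⟩
    · intro w; rw [ρ₃_eq]; exact induceSingletonConnected _ _
    · intro w w' h
      rw [ρ₃_eq, ρ₃_eq]
      exact Set.disjoint_singleton.mpr (fun e => h (f₃_inj e))
    · intro w w' h
      exact ⟨f₃ w, by rw [ρ₃_eq]; rfl, f₃ w', by rw [ρ₃_eq]; rfl, adj_main h⟩
  exact ⟨main, ⟨ρ₃, main⟩⟩
end
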